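/- With f as above and e₁,...,eₙ a right K-basis of D, the matrix A = [f(e_i* e_j)] ∈ M_n(K) is nonsingular and hermitian, and the involution X^# = A⁻¹X*A on M_n(K) satisfies λ(a*) = λ(a)^# for all a ∈ D, where λ is the left regular representation with respect to this basis. -/

import Mathlib

open Matrix

/-- An involution on a ring: an additive, anti-multiplicative map of order at most 2. -/
def IsInvolution {R : Type*} [Ring R] (τ : R → R) : Prop :=
  (∀ a b : R, τ (a + b) = τ a + τ b) ∧ (∀ a b : R, τ (a * b) = τ b * τ a) ∧
    (∀ a : R, τ (τ a) = a)

/-- The conjugate-transpose involution on `Mₙ(D)` induced by an involution `σ` on `D`. -/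
def matStar {D : Type*} [Ring D] {n : ℕ} (σ : D → D)
    (A : Matrix (Fin n) (Fin n) D) : Matrix (Fin n) (Fin n) D :=
  (Aᵀ).map σ

/-- Let `K` be a σ-invariant maximal subfield of a division algebra `D`, `f : D → K`
a unital hermitian `K`-`K` bilinear projection, `e₁,…,eₙ` a right `K`-basis of `D` and
`λ` the left regular representation.  Then `A = [f(eᵢ* eⱼ)]` is nonsingular and
hermitian, and the involution `X^# = A⁻¹ X* A` on `Mₙ(K)` satisfies `λ(a*) = λ(a)^#`. -/
theorem stmt_13 {D : Type*} [DivisionRing D] {n : ℕ}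
    (σ : D → D) (hσ : IsInvolution σ)
    (K : Subfield D) (hKσ : ∀ k ∈ K, σ k ∈ K)
    (f : D → D) (hfK : ∀ z, f z ∈ K)
    (hfadd : ∀ z w, f (z + w) = f z + f w) (hfone : f 1 = 1)
    (hfherm : ∀ z, σ (f z) = f (σ z))
    (hfbil : ∀ k ∈ K, ∀ k' ∈ K, ∀ z, f (k * z * k') = k * f z * k')
    (e : Fin n → D)
    (hspan : ∀ d : D, ∃ c : Fin n → D, (∀ i, c i ∈ K) ∧ d = ∑ i, e i * c i)
    (hindep : ∀ c : Fin n → D, (∀ i, c i ∈ K) → (∑ i, e i * c i) = 0 → ∀ i, c i = 0)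
    (lam : D → Matrix (Fin n) (Fin n) D)
    (hlamK : ∀ d i j, lam d i j ∈ K)
    (hlam : ∀ (d : D) (j : Fin n), d * e j = ∑ i, e i * lam d i j) :
    matStar σ (Matrix.of fun i j => f (σ (e i) * e j)) =
        (Matrix.of fun i j => f (σ (e i) * e j)) ∧
      ∃ B : Matrix (Fin n) (Fin n) D, (∀ i j, B i j ∈ K) ∧
        B * (Matrix.of fun i j => f (σ (e i) * e j)) = 1 ∧
        (Matrix.of fun i j => f (σ (e i) * e j)) * B = 1 ∧
        ∀ d : D, lam (σ d) =
          B * matStar σ (lam d) * (Matrix.of fun i j => f (σ (e i) * e j)) := by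
  classical
  obtain ⟨hadd, hmul, hinv⟩ := hσ
  set A : Matrix (Fin n) (Fin n) D := Matrix.of fun i j => f (σ (e i) * e j) with hA
  -- basic facts about σ and f
  have hσ0 : σ 0 = 0 := by
    have h := hadd 0 0
    rw [add_zero] at h
    simpa using h
  have hσ1 : σ 1 = 1 := by
    have h := hmul 1 1
    rw [one_mul] at h
    rcases eq_or_ne (σ 1) 0 with h0 | h0
    · have h1 : (1 : D) = 0 := by rw [← hinv 1, h0, hσ0]
      exact absurd h1 one_ne_zero
    · have h2 : σ 1 * σ 1 = σ 1 * 1 := by rw [mul_one, ← h]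
      exact mul_left_cancel₀ h0 h2
  let F : D →+ D := AddMonoidHom.mk' f (fun a b => hfadd a b)
  let S : D →+ D := AddMonoidHom.mk' σ (fun a b => hadd a b)
  have fsum : ∀ (g : Fin n → D), f (∑ i, g i) = ∑ i, f (g i) :=
    fun g => map_sum F g Finset.univ
  have ssum : ∀ (g : Fin n → D), σ (∑ i, g i) = ∑ i, σ (g i) :=
    fun g => map_sum S g Finset.univ
  have frk : ∀ z k, k ∈ K → f (z * k) = f z * k := fun z k hk => by
    have h := hfbil 1 K.one_mem k hk z
    simpa using h
  have flk : ∀ k z, k ∈ K → f (k * z) = k * f z := fun k z hk => by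
    have h := hfbil k hk 1 K.one_mem z
    simpa using h
  -- hermitian
  have hherm : matStar σ A = A := by
    ext i j
    show σ (A j i) = A i j
    show σ (f (σ (e j) * e i)) = f (σ (e i) * e j)
    rw [hfherm, hmul (σ (e j)) (e i), hinv (e j)]
  -- matStar is an anti-homomorphism
  have hmsmul : ∀ X Y : Matrix (Fin n) (Fin n) D,
      matStar σ (X * Y) = matStar σ Y * matStar σ X := by
    intro X Y
    ext i j
    show σ ((X * Y) j i) = ∑ k, σ (Y k i) * σ (X j k)
    rw [Matrix.mul_apply]
    calc σ (∑ k, X j k * Y k i) = ∑ k, σ (X j k * Y k i) := map_sum S _ _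
    _ = ∑ k, σ (Y k i) * σ (X j k) := Finset.sum_congr rfl fun k _ => hmul _ _
  have hmsone : matStar σ (1 : Matrix (Fin n) (Fin n) D) = 1 := by
    ext i j
    show σ ((1 : Matrix (Fin n) (Fin n) D) j i) = (1 : Matrix (Fin n) (Fin n) D) i j
    rcases eq_or_ne i j with h | h
    · subst h; simp [Matrix.one_apply, hσ1]
    · simp [Matrix.one_apply, h, Ne.symm h, hσ0]
  -- the key intertwining identity
  have hkey : ∀ d : D, A * lam (σ d) = matStar σ (lam d) * A := by
    intro d
    ext i j
    rw [Matrix.mul_apply, Matrix.mul_apply]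
    have L : ∑ k, A i k * lam (σ d) k j = f (σ (e i) * (σ d * e j)) := by
      symm
      rw [hlam (σ d) j, Finset.mul_sum,
        fsum (fun k => σ (e i) * (e k * lam (σ d) k j))]
      refine Finset.sum_congr rfl fun k _ => ?_
      rw [← mul_assoc, frk _ _ (hlamK (σ d) k j)]
      rfl
    have Rr : ∑ k, matStar σ (lam d) i k * A k j = f (σ (e i) * σ d * e j) := by
      have step : ∀ k, matStar σ (lam d) i k * A k j
          = f (σ (e k * lam d k i) * e j) := by
        intro k
        show σ (lam d k i) * A k j = f (σ (e k * lam d k i) * e j)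
        rw [hmul (e k) (lam d k i), mul_assoc, flk _ _ (hKσ _ (hlamK d k i))]
        rfl
      rw [Finset.sum_congr rfl (fun k _ => step k),
        ← fsum (fun k => σ (e k * lam d k i) * e j)]
      congr 1
      rw [← Finset.sum_mul, ← ssum (fun k => e k * lam d k i), ← hlam d i,
        hmul d (e i)]
    rw [L, Rr, mul_assoc]
  -- D as a right K-vector space, encoded over (↥K)ᵐᵒᵖ
  letI : Module (↥K)ᵐᵒᵖ D :=
    { smul := fun k d => d * ((MulOpposite.unop k : ↥K) : D)
      one_smul := fun d => by
        show d * ((MulOpposite.unop 1 : ↥K) : D) = d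
        simp
      mul_smul := fun x y d => by
        show d * ((MulOpposite.unop (x * y) : ↥K) : D)
          = (d * ((MulOpposite.unop y : ↥K) : D)) * ((MulOpposite.unop x : ↥K) : D)
        rw [MulOpposite.unop_mul]
        push_cast
        rw [mul_assoc]
      smul_zero := fun x => zero_mul _
      smul_add := fun x a b => add_mul _ _ _
      add_smul := fun x y d => by
        show d * ((MulOpposite.unop (x + y) : ↥K) : D)
          = d * ((MulOpposite.unop x : ↥K) : D) + d * ((MulOpposite.unop y : ↥K) : D)
        rw [MulOpposite.unop_add]
        push_cast
        rw [mul_add]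
      zero_smul := fun d => by
        show d * ((MulOpposite.unop 0 : ↥K) : D) = 0
        simp }
  have hsmul : ∀ (k : (↥K)ᵐᵒᵖ) (d : D), k • d = d * ((MulOpposite.unop k : ↥K) : D) :=
    fun k d => rfl
  let φ : D →ₗ[(↥K)ᵐᵒᵖ] (Fin n → (↥K)ᵐᵒᵖ) :=
    { toFun := fun z i => MulOpposite.op (⟨f (σ (e i) * z), hfK _⟩ : ↥K)
      map_add' := fun x y => funext fun i => by
        apply MulOpposite.unop_injective
        apply Subtype.ext
        show f (σ (e i) * (x + y)) = f (σ (e i) * x) + f (σ (e i) * y)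
        rw [mul_add, hfadd]
      map_smul' := fun k z => funext fun i => by
        apply MulOpposite.unop_injective
        apply Subtype.ext
        show f (σ (e i) * (z * ((MulOpposite.unop k : ↥K) : D)))
          = f (σ (e i) * z) * ((MulOpposite.unop k : ↥K) : D)
        rw [← mul_assoc, frk _ _ (MulOpposite.unop k).2] }
  have hφ : ∀ (z : D) (i : Fin n),
      φ z i = MulOpposite.op (⟨f (σ (e i) * z), hfK _⟩ : ↥K) := fun z i => rfl
  -- injectivity of φ
  have hzero : ∀ z : D, (∀ i, f (σ (e i) * z) = 0) → z = 0 := by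
    intro z hz
    by_contra hz0
    have hall : ∀ d : D, f (σ d * z) = 0 := by
      intro d
      obtain ⟨c, hcK, rfl⟩ := hspan d
      have h1 : σ (∑ i, e i * c i) * z = ∑ i, σ (c i) * (σ (e i) * z) := by
        rw [ssum (fun i => e i * c i), Finset.sum_mul]
        exact Finset.sum_congr rfl fun i _ => by rw [hmul, mul_assoc]
      rw [h1, fsum (fun i => σ (c i) * (σ (e i) * z))]
      refine Finset.sum_eq_zero fun i _ => ?_
      rw [flk _ _ (hKσ _ (hcK i)), hz i, mul_zero]
    have h1 := hall (σ z⁻¹)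
    rw [hinv, inv_mul_cancel₀ hz0, hfone] at h1
    exact one_ne_zero h1
  have hinj : Function.Injective φ := by
    rw [← LinearMap.ker_eq_bot, LinearMap.ker_eq_bot']
    intro z hzeq
    apply hzero z
    intro i
    have h1 := congrFun hzeq i
    rw [hφ] at h1
    have h2 : (⟨f (σ (e i) * z), hfK _⟩ : ↥K) = 0 := by
      simpa using congrArg MulOpposite.unop h1
    simpa using congrArg Subtype.val h2
  -- a basis of D
  have hli : LinearIndependent (↥K)ᵐᵒᵖ e := by
    rw [Fintype.linearIndependent_iff]
    intro g hg i
    have h0 : (∑ j, e j * ((MulOpposite.unop (g j) : ↥K) : D)) = 0 := by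
      rw [← hg]
      exact Finset.sum_congr rfl fun j _ => rfl
    have h1 := hindep _ (fun j => (MulOpposite.unop (g j)).2) h0 i
    have h2 : (MulOpposite.unop (g i) : ↥K) = 0 := Subtype.ext h1
    rw [← MulOpposite.op_unop (g i), h2, MulOpposite.op_zero]
  have hsp : ⊤ ≤ Submodule.span (↥K)ᵐᵒᵖ (Set.range e) := by
    intro d _
    obtain ⟨c, hcK, rfl⟩ := hspan d
    refine Submodule.sum_mem _ fun i _ => ?_
    have h1 : e i * c i = (MulOpposite.op (⟨c i, hcK i⟩ : ↥K)) • e i := rfl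
    rw [h1]
    exact Submodule.smul_mem _ _ (Submodule.subset_span ⟨i, rfl⟩)
  let b : Module.Basis (Fin n) (↥K)ᵐᵒᵖ D := Module.Basis.mk hli hsp
  haveI : FiniteDimensional (↥K)ᵐᵒᵖ D := Module.Finite.of_basis b
  have hsurj : Function.Surjective φ := by
    refine (LinearMap.injective_iff_surjective_of_finrank_eq_finrank ?_).mp hinj
    rw [Module.finrank_eq_card_basis b, Module.finrank_fin_fun, Fintype.card_fin]
  -- construct the inverse matrix
  have hB : ∀ i : Fin n, ∃ c : Fin n → D, (∀ j, c j ∈ K) ∧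
      ∀ k, (∑ j, f (σ (e k) * e j) * c j) = if k = i then 1 else 0 := by
    intro i
    obtain ⟨z, hz⟩ := hsurj (Pi.single i (1 : (↥K)ᵐᵒᵖ))
    have hzk : ∀ k, f (σ (e k) * z) = if k = i then 1 else 0 := by
      intro k
      have h1 := congrFun hz k
      rw [hφ] at h1
      rcases eq_or_ne k i with h | h
      · subst h
        rw [Pi.single_eq_same] at h1
        rw [if_pos rfl]
        simpa using congrArg (fun x => ((MulOpposite.unop x : ↥K) : D)) h1
      · rw [Pi.single_eq_of_ne h] at h1
        rw [if_neg h]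
        simpa using congrArg (fun x => ((MulOpposite.unop x : ↥K) : D)) h1
    obtain ⟨c, hcK, hzc⟩ := hspan z
    refine ⟨c, hcK, fun k => ?_⟩
    rw [← hzk k, hzc, Finset.mul_sum, fsum (fun j => σ (e k) * (e j * c j))]
    refine Finset.sum_congr rfl fun j _ => ?_
    rw [← mul_assoc, frk _ _ (hcK j)]
  choose C hCK hCA using hB
  set B : Matrix (Fin n) (Fin n) D := Matrix.of (fun j i => C i j) with hBdef
  have hABone : A * B = 1 := by
    ext k i
    rw [Matrix.mul_apply, Matrix.one_apply]
    exact hCA i k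
  have hmsB : matStar σ B * A = 1 := by
    have h := hmsmul A B
    rw [hABone, hmsone, hherm] at h
    exact h.symm
  have hBfix : matStar σ B = B := by
    calc matStar σ B = matStar σ B * (A * B) := by rw [hABone, mul_one]
    _ = (matStar σ B * A) * B := by rw [mul_assoc]
    _ = B := by rw [hmsB, one_mul]
  have hBA : B * A = 1 := by rw [← hBfix]; exact hmsB
  refine ⟨hherm, B, fun i j => hCK j i, hBA, hABone, fun d => ?_⟩
  calc lam (σ d) = (B * A) * lam (σ d) := by rw [hBA, one_mul]
  _ = B * (A * lam (σ d)) := by rw [mul_assoc]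
  _ = B * (matStar σ (lam d) * A) := by rw [hkey d]
  _ = B * matStar σ (lam d) * A := by rw [mul_assoc]
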